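/- Under Assumption 1, for every u ∈ H¹(Ω) and every β > λ_k − λ_1: (a) ‖P⊥u‖²_{L²(Ω)} ≤ (L_k(u) − λ_k)/min{β + λ_1 − λ_k, λ_{k'} − λ_k} · ‖u‖²_{L²(Ω)}, and (b) ‖∇(P⊥u)‖²_{L²(Ω)} ≤ (L_k(u) − λ_k) · ((λ_k − V_min)/min{β + λ_1 − λ_k, λ_{k'} − λ_k} + 1) · ‖u‖²_{L²(Ω)}. -/

import Mathlib

open MeasureTheory Real Set
open scoped RealInnerProductSpace

noncomputable section

abbrev Pt (d : ℕ) := EuclideanSpace ℝ (Fin d)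

/-- The open unit hypercube `Ω = (0,1)^d`. -/
def cube (d : ℕ) : Set (Pt d) := {x | ∀ i, x i ∈ Set.Ioo (0 : ℝ) 1}

/-- Lebesgue measure restricted to the cube. -/
def μcube (d : ℕ) : Measure (Pt d) := volume.restrict (cube d)

/-- `L²(Ω)` inner product. -/
def L2ip (d : ℕ) (u v : Pt d → ℝ) : ℝ := ∫ x, u x * v x ∂(μcube d)

/-- Squared `L²(Ω)` norm. -/
def L2sq (d : ℕ) (u : Pt d → ℝ) : ℝ := ∫ x, (u x) ^ 2 ∂(μcube d)

/-- `⟨u, Hu⟩ = ∫_Ω (|∇u|² + V u²)`. -/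
def energy (d : ℕ) (V u : Pt d → ℝ) : ℝ :=
  ∫ x, (‖gradient u x‖ ^ 2 + V x * (u x) ^ 2) ∂(μcube d)

/-- Membership in `H¹(Ω)` (via a differentiable representative). -/
def MemH1 (d : ℕ) (u : Pt d → ℝ) : Prop :=
  ContinuousOn u (closure (cube d)) ∧
  (∀ x ∈ cube d, DifferentiableAt ℝ u x) ∧
  Integrable (fun x => (u x) ^ 2 + ‖gradient u x‖ ^ 2) (μcube d)

/-- Membership in `H¹₀(Ω)`. -/
def MemH10 (d : ℕ) (u : Pt d → ℝ) : Prop :=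
  MemH1 d u ∧ ∀ x ∈ frontier (cube d), u x = 0

/-- `ψ` is a (weak) Dirichlet eigenfunction of `-Δ + V` on `Ω` with eigenvalue `lam`. -/
def IsEigenfun (d : ℕ) (V : Pt d → ℝ) (lam : ℝ) (ψ : Pt d → ℝ) : Prop :=
  MemH10 d ψ ∧ L2sq d ψ ≠ 0 ∧
  ∀ v, MemH10 d v →
    (∫ x, (⟪gradient ψ x, gradient v x⟫ + V x * ψ x * v x) ∂(μcube d))
      = lam * ∫ x, ψ x * v x ∂(μcube d)

/-- The spectral setting: for `j ≥ 1`, `(lam j, ψ j)` enumerate the Dirichlet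
spectrum of `-Δ + V` on `Ω` in ascending order (with multiplicity), the
eigenfunctions forming an orthonormal basis of `L²(Ω)`. -/
def SpectralSetting (d : ℕ) (V : Pt d → ℝ) (lam : ℕ → ℝ) (ψ : ℕ → Pt d → ℝ) : Prop :=
  0 < lam 1 ∧
  (∀ i j, 1 ≤ i → i ≤ j → lam i ≤ lam j) ∧
  Filter.Tendsto lam Filter.atTop Filter.atTop ∧
  (∀ i j, 1 ≤ i → 1 ≤ j → L2ip d (ψ i) (ψ j) = if i = j then 1 else 0) ∧
  (∀ j, 1 ≤ j → IsEigenfun d V (lam j) (ψ j)) ∧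
  (∀ μ φ, IsEigenfun d V μ φ → lam 1 ≤ μ) ∧
  (∀ u, MemH10 d u → L2sq d u = ∑' j : ℕ, (L2ip d u (ψ (j + 1))) ^ 2) ∧
  (∀ u, MemH10 d u → energy d V u = ∑' j : ℕ, lam (j + 1) * (L2ip d u (ψ (j + 1))) ^ 2)

/-- The population loss `L_k` with orthogonality penalty parameter `β`. -/
def loss (d : ℕ) (V : Pt d → ℝ) (ψ : ℕ → Pt d → ℝ) (β : ℝ) (k : ℕ)
    (u : Pt d → ℝ) : ℝ :=
  energy d V u / L2sq d u
    + β * (∑ j ∈ Finset.Ico 1 k, (L2ip d u (ψ j)) ^ 2) / L2sq d u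

/-- The orthogonal projection of `u` onto the orthogonal complement of the
`k`-th eigenspace `U_k = span{ψ_1,…,ψ_{k-1}}^⊥ ∩ ker(H - λ_k I)`, which (in the
spectral setting) is spanned by `ψ_k, …, ψ_{k'-1}`. -/
def Pperp (d k k' : ℕ) (ψ : ℕ → Pt d → ℝ) (u : Pt d → ℝ) : Pt d → ℝ :=
  fun x => u x - ∑ j ∈ Finset.Ico k k', L2ip d u (ψ j) * ψ j x

/-- Squared `L²(Ω)` norm of the gradient. -/
def gradSq (d : ℕ) (u : Pt d → ℝ) : ℝ := ∫ x, ‖gradient u x‖ ^ 2 ∂(μcube d)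

section AuxStatement1
set_option maxHeartbeats 1000000

variable {d : ℕ}

lemma isOpen_cube (d : ℕ) : IsOpen (cube d) := by
  have : cube d = ⋂ i : Fin d, (fun x : Pt d => x i) ⁻¹' Set.Ioo (0:ℝ) 1 := by
    ext x; simp [cube]
  rw [this]
  exact isOpen_iInter_of_finite fun i => (isOpen_Ioo).preimage (by fun_prop)

lemma measurableSet_cube (d : ℕ) : MeasurableSet (cube d) := (isOpen_cube d).measurableSet

lemma cube_bounded (d : ℕ) : Bornology.IsBounded (cube d) := by
  have : cube d ⊆ Metric.closedBall 0 (d+1) := by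
    intro x hx
    have hb : ∀ i, |x i| ≤ 1 := fun i => by
      have h := hx i; rw [abs_le]; exact ⟨by linarith [h.1], by linarith [h.2]⟩
    simp only [Metric.mem_closedBall, dist_zero_right]
    calc ‖x‖ = Real.sqrt (∑ i, ‖x i‖^2) := by rw [EuclideanSpace.norm_eq]
    _ ≤ Real.sqrt (∑ i : Fin d, 1) := by
        apply Real.sqrt_le_sqrt; apply Finset.sum_le_sum; intro i _
        have := hb i; rw [Real.norm_eq_abs]; nlinarith [abs_nonneg (x i)]
    _ ≤ (d+1 : ℝ) := by
        simp only [Finset.sum_const, Finset.card_univ, Fintype.card_fin, nsmul_eq_mul, mul_one]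
        calc Real.sqrt d ≤ Real.sqrt ((d+1)^2) := by
              apply Real.sqrt_le_sqrt; nlinarith [Nat.cast_nonneg (α := ℝ) d]
        _ = (d+1:ℝ) := Real.sqrt_sq (by positivity)
  exact (Metric.isBounded_closedBall).subset this

instance (d : ℕ) : IsFiniteMeasure (μcube d) := by
  constructor
  rw [μcube, Measure.restrict_apply_univ]
  exact (cube_bounded d).measure_lt_top

lemma measurable_gradient_fun (d : ℕ) (f : Pt d → ℝ) : Measurable (fun x => gradient f x) :=
  ((InnerProductSpace.toDual ℝ (Pt d)).symm.continuous.measurable).comp (measurable_fderiv ℝ f)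

lemma ae_mem_cube (d : ℕ) : ∀ᵐ x ∂(μcube d), x ∈ cube d :=
  ae_restrict_mem (measurableSet_cube d)

lemma aemeas_of_contOn {f : Pt d → ℝ} (hf : ContinuousOn f (cube d)) :
    AEMeasurable f (μcube d) :=
  hf.aemeasurable (measurableSet_cube d)

lemma MemH1.contOn {f : Pt d → ℝ} (hf : MemH1 d f) : ContinuousOn f (cube d) :=
  hf.1.mono subset_closure

lemma MemH1.aemeas {f : Pt d → ℝ} (hf : MemH1 d f) : AEMeasurable f (μcube d) :=
  aemeas_of_contOn hf.contOn

lemma MemH1.int_sq {f : Pt d → ℝ} (hf : MemH1 d f) :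
    Integrable (fun x => f x ^ 2) (μcube d) := by
  refine (hf.2.2).mono' ((hf.aemeas.pow_const 2).aestronglyMeasurable) ?_
  filter_upwards with x
  have : (0:ℝ) ≤ ‖gradient f x‖ ^ 2 := by positivity
  simp only [Real.norm_eq_abs, abs_of_nonneg (sq_nonneg (f x))]
  linarith

lemma MemH1.int_gradsq {f : Pt d → ℝ} (hf : MemH1 d f) :
    Integrable (fun x => ‖gradient f x‖ ^ 2) (μcube d) := by
  refine (hf.2.2).mono' ?_ ?_
  · exact (((measurable_gradient_fun d f).norm.pow_const 2).aemeasurable).aestronglyMeasurable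
  · filter_upwards with x
    have : (0:ℝ) ≤ f x ^ 2 := sq_nonneg _
    simp only [Real.norm_eq_abs, abs_of_nonneg (sq_nonneg (‖gradient f x‖))]
    linarith

lemma integrable_mul_of_sq {f g : Pt d → ℝ} (hfm : AEMeasurable f (μcube d))
    (hgm : AEMeasurable g (μcube d)) (hf : Integrable (fun x => f x ^ 2) (μcube d))
    (hg : Integrable (fun x => g x ^ 2) (μcube d)) :
    Integrable (fun x => f x * g x) (μcube d) := by
  refine (hf.add hg).mono' ((hfm.mul hgm).aestronglyMeasurable) ?_
  filter_upwards with x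
  simp only [Pi.add_apply]
  rw [Real.norm_eq_abs, abs_mul]
  nlinarith [abs_nonneg (f x), abs_nonneg (g x), sq_abs (f x), sq_abs (g x),
    sq_nonneg (|f x| - |g x|)]

lemma integrable_sq_sum {ι : Type*} (s : Finset ι) (f : ι → Pt d → ℝ)
    (hm : ∀ i ∈ s, AEMeasurable (f i) (μcube d))
    (hi : ∀ i ∈ s, Integrable (fun x => f i x ^ 2) (μcube d)) :
    Integrable (fun x => (∑ i ∈ s, f i x) ^ 2) (μcube d) := by
  have hrw : (fun x => (∑ i ∈ s, f i x) ^ 2)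
      = fun x => ∑ i ∈ s, ∑ j ∈ s, f i x * f j x := funext fun x => by
    rw [sq, Finset.sum_mul_sum]
  rw [hrw]
  exact integrable_finset_sum s fun i hi' => integrable_finset_sum s fun j hj =>
    integrable_mul_of_sq (hm i hi') (hm j hj) (hi i hi') (hi j hj)

lemma zero_on_cube {f : Pt d → ℝ} (hf : ContinuousOn f (cube d))
    (h0 : f =ᵐ[μcube d] 0) : ∀ x ∈ cube d, f x = 0 := by
  by_contra hne
  push_neg at hne
  obtain ⟨x, hx, hfx⟩ := hne
  have hopen : IsOpen (cube d ∩ f ⁻¹' ({0}ᶜ)) :=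
    hf.isOpen_inter_preimage (isOpen_cube d) (isOpen_compl_singleton)
  have hne' : (cube d ∩ f ⁻¹' ({0}ᶜ)).Nonempty := ⟨x, hx, hfx⟩
  have hpos : 0 < volume (cube d ∩ f ⁻¹' ({0}ᶜ)) := hopen.measure_pos volume hne'
  have hz : μcube d {y | f y ≠ 0} = 0 := by
    have := h0
    rw [Filter.EventuallyEq, ae_iff] at this
    simpa using this
  rw [μcube, Measure.restrict_apply' (measurableSet_cube d)] at hz
  have hsub : cube d ∩ f ⁻¹' ({0}ᶜ) ⊆ {y | f y ≠ 0} ∩ cube d := by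
    intro y hy; exact ⟨hy.2, hy.1⟩
  have := measure_mono hsub (μ := volume)
  rw [hz] at this
  exact absurd (le_antisymm (le_trans this (le_refl 0)) (by positivity)) (ne_of_gt hpos)

end AuxStatement1
section AuxStatement2

variable {d : ℕ}

lemma integrable_of_integral_ne_zero {f : Pt d → ℝ}
    (h : ∫ x, f x ∂(μcube d) ≠ 0) : Integrable f (μcube d) := by
  by_contra hn; rw [integral_undef hn] at h; exact h rfl

lemma eigen_facts {V : Pt d → ℝ} {lam : ℝ} {ψf : Pt d → ℝ}
    (h : IsEigenfun d V lam ψf) (hψψ : L2ip d ψf ψf = 1) (hlam : lam ≠ 0) :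
    Integrable (fun x => ‖gradient ψf x‖ ^ 2 + V x * ψf x ^ 2) (μcube d) ∧
    ∫ x, (‖gradient ψf x‖ ^ 2 + V x * ψf x ^ 2) ∂(μcube d) = lam := by
  have heq := h.2.2 ψf h.1
  have hrw : (fun x => ‖gradient ψf x‖ ^ 2 + V x * ψf x ^ 2)
      = fun x => (⟪gradient ψf x, gradient ψf x⟫ + V x * ψf x * ψf x) := by
    funext x; rw [real_inner_self_eq_norm_sq]; ring
  have hval : ∫ x, (‖gradient ψf x‖ ^ 2 + V x * ψf x ^ 2) ∂(μcube d) = lam := by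
    rw [hrw, heq]
    have : (∫ x, ψf x * ψf x ∂(μcube d)) = 1 := hψψ
    rw [this, mul_one]
  exact ⟨integrable_of_integral_ne_zero (by rw [hval]; exact hlam), hval⟩

lemma aemeas_V_psi_sq {V : Pt d → ℝ} {ψf : Pt d → ℝ}
    (hInt : Integrable (fun x => ‖gradient ψf x‖ ^ 2 + V x * ψf x ^ 2) (μcube d)) :
    AEMeasurable (fun x => V x * ψf x ^ 2) (μcube d) := by
  have h1 : AEMeasurable (fun x => ‖gradient ψf x‖ ^ 2 + V x * ψf x ^ 2) (μcube d) :=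
    hInt.aemeasurable
  have h2 := h1.sub (((measurable_gradient_fun d ψf).norm.pow_const 2).aemeasurable)
  exact h2.congr (Filter.EventuallyEq.of_eq (funext fun x => by simp only [Pi.sub_apply]; ring))

lemma bessel_offset {u : Pt d → ℝ} {ψ : ℕ → Pt d → ℝ} {N : Set (Pt d)}
    (hN : MeasurableSet N)
    (hum : AEMeasurable u (μcube d)) (hu2 : Integrable (fun x => u x ^ 2) (μcube d))
    (hψm : ∀ j : ℕ, AEMeasurable (ψ (j+1)) (μcube d))
    (hψ2 : ∀ j : ℕ, Integrable (fun x => ψ (j+1) x ^ 2) (μcube d))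
    (horth : ∀ i j : ℕ, L2ip d (ψ (i+1)) (ψ (j+1)) = if i + 1 = j + 1 then 1 else 0)
    (hψ0 : ∀ᵐ x ∂(μcube d), x ∉ N → ∀ j : ℕ, ψ (j+1) x = 0) (n : ℕ) :
    ∑ j ∈ Finset.range n, (L2ip d u (ψ (j+1))) ^ 2 ≤ ∫ x in N, u x ^ 2 ∂(μcube d) := by
  classical
  set a : ℕ → ℝ := fun j => L2ip d u (ψ (j+1)) with ha
  have huψ : ∀ j : ℕ, Integrable (fun x => u x * ψ (j+1) x) (μcube d) := fun j =>
    integrable_mul_of_sq hum (hψm j) hu2 (hψ2 j)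
  have hψψ : ∀ i j : ℕ, Integrable (fun x => ψ (i+1) x * ψ (j+1) x) (μcube d) := fun i j =>
    integrable_mul_of_sq (hψm i) (hψm j) (hψ2 i) (hψ2 j)
  have hNuψ : ∀ j : ℕ, ∫ x in N, u x * ψ (j+1) x ∂(μcube d) = a j := by
    intro j
    rw [← integral_indicator hN]
    refine integral_congr_ae ?_
    filter_upwards [hψ0] with x hx
    by_cases hxN : x ∈ N
    · rw [Set.indicator_of_mem hxN]
    · rw [Set.indicator_of_notMem hxN, hx hxN j, mul_zero]
  have hNψψ : ∀ i j : ℕ, ∫ x in N, ψ (i+1) x * ψ (j+1) x ∂(μcube d)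
      = if i + 1 = j + 1 then 1 else 0 := by
    intro i j
    rw [← horth i j, ← integral_indicator hN]
    refine integral_congr_ae ?_
    filter_upwards [hψ0] with x hx
    by_cases hxN : x ∈ N
    · rw [Set.indicator_of_mem hxN]
    · rw [Set.indicator_of_notMem hxN, hx hxN i, zero_mul]
  set v : Pt d → ℝ := fun x => ∑ j ∈ Finset.range n, a j * ψ (j+1) x with hv
  have key : (0:ℝ) ≤ ∫ x in N, (u x - v x) ^ 2 ∂(μcube d) :=
    integral_nonneg fun x => sq_nonneg _
  have hexp : (fun x => (u x - v x) ^ 2)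
      = fun x => u x ^ 2 - 2 * (∑ j ∈ Finset.range n, a j * (u x * ψ (j+1) x))
        + ∑ j ∈ Finset.range n, ∑ i ∈ Finset.range n,
            (a j * a i) * (ψ (j+1) x * ψ (i+1) x) := by
    funext x
    have h1 : v x * v x = ∑ j ∈ Finset.range n, ∑ i ∈ Finset.range n,
        (a j * a i) * (ψ (j+1) x * ψ (i+1) x) := by
      rw [hv]
      rw [Finset.sum_mul_sum]
      refine Finset.sum_congr rfl fun j _ => Finset.sum_congr rfl fun i _ => by ring
    have h2 : u x * v x = ∑ j ∈ Finset.range n, a j * (u x * ψ (j+1) x) := by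
      rw [hv, Finset.mul_sum]
      exact Finset.sum_congr rfl fun j _ => by ring
    have : (u x - v x) ^ 2 = u x ^ 2 - 2 * (u x * v x) + v x * v x := by ring
    rw [this, h1, h2]
  have Iuv : Integrable (fun x => ∑ j ∈ Finset.range n, a j * (u x * ψ (j+1) x))
      ((μcube d).restrict N) :=
    (integrable_finset_sum _ fun j _ => (huψ j).const_mul (a j)).restrict
  have Ivv : Integrable (fun x => ∑ j ∈ Finset.range n, ∑ i ∈ Finset.range n,
      (a j * a i) * (ψ (j+1) x * ψ (i+1) x)) ((μcube d).restrict N) :=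
    (integrable_finset_sum _ fun j _ => integrable_finset_sum _ fun i _ =>
      (hψψ j i).const_mul _).restrict
  have Iuv2 : Integrable (fun x => 2 * ∑ j ∈ Finset.range n, a j * (u x * ψ (j+1) x))
      ((μcube d).restrict N) := Iuv.const_mul 2
  have Isub : Integrable (fun x => u x ^ 2
      - 2 * ∑ j ∈ Finset.range n, a j * (u x * ψ (j+1) x)) ((μcube d).restrict N) :=
    hu2.restrict.sub Iuv2
  have hval : ∫ x in N, (u x - v x) ^ 2 ∂(μcube d)
      = ∫ x in N, u x ^ 2 ∂(μcube d) - ∑ j ∈ Finset.range n, a j ^ 2 := by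
    rw [hexp, integral_add Isub Ivv, integral_sub hu2.restrict Iuv2]
    have e1 : ∫ x in N, 2 * (∑ j ∈ Finset.range n, a j * (u x * ψ (j+1) x)) ∂(μcube d)
        = 2 * ∑ j ∈ Finset.range n, a j ^ 2 := by
      rw [integral_const_mul, integral_finset_sum _
        (fun j _ => ((huψ j).const_mul (a j)).restrict)]
      congr 1
      refine Finset.sum_congr rfl fun j _ => ?_
      rw [integral_const_mul, hNuψ j]; ring
    have e2 : ∫ x in N, (∑ j ∈ Finset.range n, ∑ i ∈ Finset.range n,
        (a j * a i) * (ψ (j+1) x * ψ (i+1) x)) ∂(μcube d)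
        = ∑ j ∈ Finset.range n, a j ^ 2 := by
      rw [integral_finset_sum _ (fun j _ => (integrable_finset_sum _ fun i _ =>
        (hψψ j i).const_mul _).restrict)]
      refine Finset.sum_congr rfl fun j hj => ?_
      rw [integral_finset_sum _ (fun i _ => ((hψψ j i).const_mul _).restrict)]
      rw [Finset.sum_eq_single j]
      · rw [integral_const_mul, hNψψ j j]; simp [sq]
      · intro i hi hne
        have hcond : ¬(j + 1 = i + 1) := fun h => hne (Nat.succ_injective h).symm
        rw [integral_const_mul, hNψψ j i, if_neg hcond, mul_zero]
      · intro hmem; exact absurd hj hmem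
    rw [e1, e2]; ring
  rw [hval] at key
  linarith

end AuxStatement2
section AuxStatement3

variable {d : ℕ}

lemma aemeas_V_mul {V : Pt d → ℝ} {ψ : ℕ → Pt d → ℝ}
    (hψm : ∀ j : ℕ, AEMeasurable (ψ (j+1)) (μcube d))
    (hψc : ∀ j : ℕ, ContinuousOn (ψ (j+1)) (cube d))
    (hVψ : ∀ j : ℕ, AEMeasurable (fun x => V x * ψ (j+1) x ^ 2) (μcube d))
    {h : Pt d → ℝ} (hh : AEMeasurable h (μcube d))
    (hhz : ∀ᵐ x ∂(μcube d), (∀ j : ℕ, ψ (j+1) x = 0) → h x = 0) :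
    AEMeasurable (fun x => V x * h x) (μcube d) := by
  classical
  set S : ℕ → Set (Pt d) := fun j => cube d ∩ (ψ (j+1)) ⁻¹' ({0}ᶜ) with hS
  have hSopen : ∀ j, IsOpen (S j) := fun j =>
    (hψc j).isOpen_inter_preimage (isOpen_cube d) isOpen_compl_singleton
  set B : ℕ → Set (Pt d) := fun j => S j \ ⋃ i ∈ Finset.range j, S i with hB
  have hBmeas : ∀ j, MeasurableSet (B j) := fun j =>
    ((hSopen j).measurableSet).diff
      (Finset.measurableSet_biUnion _ fun i _ => (hSopen i).measurableSet)
  set F : ℕ → Pt d → ℝ := fun n x => ∑ j ∈ Finset.range n,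
    (B j).indicator (fun y => (V y * ψ (j+1) y ^ 2) * (ψ (j+1) y ^ 2)⁻¹ * h y) x with hF
  have hFm : ∀ n, AEMeasurable (F n) (μcube d) := fun n =>
    Finset.aemeasurable_fun_sum _ fun j _ =>
      ((((hVψ j).mul (((hψm j).pow_const 2).inv)).mul hh).indicator (hBmeas j))
  refine aemeasurable_of_tendsto_metrizable_ae Filter.atTop hFm ?_
  filter_upwards [hhz, ae_mem_cube d] with x hx hcx
  by_cases hex : ∃ j : ℕ, ψ (j+1) x ≠ 0
  · have hj0 : ψ (Nat.find hex + 1) x ≠ 0 := Nat.find_spec hex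
    have hxS : x ∈ S (Nat.find hex) := ⟨hcx, hj0⟩
    have hxB : x ∈ B (Nat.find hex) := by
      refine ⟨hxS, ?_⟩
      intro hxi
      simp only [Set.mem_iUnion] at hxi
      obtain ⟨i, hir, hxi'⟩ := hxi
      exact Nat.find_min hex (Finset.mem_range.1 hir) hxi'.2
    have hxnB : ∀ j, j ≠ Nat.find hex → x ∉ B j := by
      intro j hne hxj
      rcases lt_or_gt_of_ne hne with hlt | hgt
      · exact Nat.find_min hex hlt hxj.1.2
      · exact hxj.2 (Set.mem_biUnion (Finset.mem_range.2 hgt) hxS)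
    have hev : ∀ n, n > Nat.find hex → F n x = V x * h x := by
      intro n hn
      show (∑ j ∈ Finset.range n,
        (B j).indicator (fun y => (V y * ψ (j+1) y ^ 2) * (ψ (j+1) y ^ 2)⁻¹ * h y) x) = V x * h x
      rw [Finset.sum_eq_single (Nat.find hex)]
      · rw [Set.indicator_of_mem hxB]
        have hne : ψ (Nat.find hex + 1) x ^ 2 ≠ 0 := pow_ne_zero 2 hj0
        field_simp
      · intro i _ hne; exact Set.indicator_of_notMem (hxnB i hne) _
      · intro hmem; exact absurd (Finset.mem_range.2 hn) hmem
    refine Filter.Tendsto.congr' ?_ (tendsto_const_nhds (x := V x * h x))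
    filter_upwards [Filter.eventually_gt_atTop (Nat.find hex)] with n hn
    exact (hev n hn).symm
  · push_neg at hex
    have hx0 : h x = 0 := hx hex
    have hFz : ∀ n, F n x = 0 := by
      intro n
      apply Finset.sum_eq_zero
      intro j _
      exact Set.indicator_of_notMem (fun hxj => hxj.1.2 (hex j)) _
    rw [hx0, mul_zero]
    simpa [hFz] using (tendsto_const_nhds (x := (0:ℝ)) (f := Filter.atTop (α := ℕ)))

end AuxStatement3
section AuxStatement4

variable {d : ℕ}

lemma L2sq_eq_L2ip (d : ℕ) (f : Pt d → ℝ) : L2sq d f = L2ip d f f := by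
  unfold L2sq L2ip
  congr 1
  funext x
  ring

end AuxStatement4

set_option maxHeartbeats 2000000 in
/-- Proposition 2.2: under Assumption 1, for every `u ∈ H¹(Ω)`
and `β > λ_k - λ_1`, the offset `P⊥u` of `u` from the eigenspace `U_k` satisfies
(a) `‖P⊥u‖²_{L²} ≤ (L_k(u)-λ_k)/min{β+λ_1-λ_k, λ_{k'}-λ_k} ‖u‖²_{L²}` and
(b) `‖∇(P⊥u)‖²_{L²} ≤ (L_k(u)-λ_k)((λ_k-V_min)/min{β+λ_1-λ_k, λ_{k'}-λ_k}+1)‖u‖²_{L²}`. -/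
theorem statement1
    (d k k' : ℕ) (hd : 1 ≤ d) (hk : 1 ≤ k)
    (V : Pt d → ℝ) (Vmin Vmax : ℝ) (hVmin : 0 < Vmin)
    (hV : ∀ x ∈ cube d, Vmin ≤ V x ∧ V x ≤ Vmax)
    (lam : ℕ → ℝ) (ψ : ℕ → Pt d → ℝ)
    (hspec : SpectralSetting d V lam ψ)
    -- `λ_{k'}` is the first eigenvalue strictly greater than `λ_k`
    (hk'1 : k + 1 ≤ k') (hk'2 : lam k < lam k') (hk'3 : lam (k' - 1) = lam k)
    (u : Pt d → ℝ) (hu : MemH1 d u)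
    (hParseval : L2sq d u = ∑' j : ℕ, (L2ip d u (ψ (j + 1))) ^ 2)
    (hEnergy : energy d V u = ∑' j : ℕ, lam (j + 1) * (L2ip d u (ψ (j + 1))) ^ 2)
    (hParsevalP : L2sq d (Pperp d k k' ψ u)
      = ∑' j : ℕ, (if k ≤ j + 1 ∧ j + 1 < k' then 0 else (L2ip d u (ψ (j + 1))) ^ 2))
    (hEnergyP : energy d V (Pperp d k k' ψ u)
      = ∑' j : ℕ, (if k ≤ j + 1 ∧ j + 1 < k' then 0
          else lam (j + 1) * (L2ip d u (ψ (j + 1))) ^ 2))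
    (β : ℝ) (hβ : lam k - lam 1 < β) :
    L2sq d (Pperp d k k' ψ u)
        ≤ (loss d V ψ β k u - lam k) / min (β + lam 1 - lam k) (lam k' - lam k)
          * L2sq d u ∧
    gradSq d (Pperp d k k' ψ u)
        ≤ (loss d V ψ β k u - lam k)
          * ((lam k - Vmin) / min (β + lam 1 - lam k) (lam k' - lam k) + 1)
          * L2sq d u := by
  classical
  obtain ⟨hlam1, hmono, _, horth, heig, _, _, _⟩ := hspec
  -- basic eigenfunction facts
  have hψH1 : ∀ j : ℕ, 1 ≤ j → MemH1 d (ψ j) := fun j hj => (heig j hj).1.1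
  have hψm : ∀ j : ℕ, AEMeasurable (ψ (j + 1)) (μcube d) :=
    fun j => (hψH1 (j + 1) (by omega)).aemeas
  have hψc : ∀ j : ℕ, ContinuousOn (ψ (j + 1)) (cube d) :=
    fun j => (hψH1 (j + 1) (by omega)).contOn
  have hψ2 : ∀ j : ℕ, Integrable (fun x => ψ (j + 1) x ^ 2) (μcube d) :=
    fun j => (hψH1 (j + 1) (by omega)).int_sq
  have hψψ1 : ∀ j : ℕ, L2ip d (ψ (j + 1)) (ψ (j + 1)) = 1 := by
    intro j
    rw [horth (j + 1) (j + 1) (by omega) (by omega), if_pos rfl]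
  have hlampos : ∀ j : ℕ, 1 ≤ j → 0 < lam j :=
    fun j hj => lt_of_lt_of_le hlam1 (hmono 1 j le_rfl hj)
  have heigfacts : ∀ j : ℕ,
      Integrable (fun x => ‖gradient (ψ (j+1)) x‖ ^ 2 + V x * ψ (j+1) x ^ 2) (μcube d) ∧
      ∫ x, (‖gradient (ψ (j+1)) x‖ ^ 2 + V x * ψ (j+1) x ^ 2) ∂(μcube d) = lam (j+1) :=
    fun j => eigen_facts (heig (j+1) (by omega)) (hψψ1 j)
      (ne_of_gt (hlampos (j+1) (by omega)))
  have hVψ : ∀ j : ℕ, AEMeasurable (fun x => V x * ψ (j + 1) x ^ 2) (μcube d) :=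
    fun j => aemeas_V_psi_sq (heigfacts j).1
  -- auxiliary integrability for V ψ²
  have hVbound : ∀ {f : Pt d → ℝ}, AEMeasurable (fun x => V x * f x ^ 2) (μcube d) →
      Integrable (fun x => f x ^ 2) (μcube d) →
      Integrable (fun x => V x * f x ^ 2) (μcube d) := by
    intro f hm hf
    refine (hf.const_mul Vmax).mono' hm.aestronglyMeasurable ?_
    filter_upwards [ae_mem_cube d] with x hx
    have h1 := (hV x hx).1
    have h2 := (hV x hx).2
    have h3 : (0:ℝ) ≤ f x ^ 2 := sq_nonneg _
    rw [Real.norm_eq_abs, abs_mul, abs_of_nonneg h3, abs_of_nonneg (by linarith)]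
    nlinarith
  have hVlow : ∀ {f : Pt d → ℝ}, Integrable (fun x => f x ^ 2) (μcube d) →
      Integrable (fun x => V x * f x ^ 2) (μcube d) →
      Vmin * ∫ x, f x ^ 2 ∂(μcube d) ≤ ∫ x, V x * f x ^ 2 ∂(μcube d) := by
    intro f hf hVf
    rw [← integral_const_mul]
    refine integral_mono_ae (hf.const_mul Vmin) hVf ?_
    filter_upwards [ae_mem_cube d] with x hx
    have h1 := (hV x hx).1
    have h3 : (0:ℝ) ≤ f x ^ 2 := sq_nonneg _
    nlinarith
  -- Vmin ≤ lam 1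
  have hVminlam1 : Vmin ≤ lam 1 := by
    obtain ⟨hI1, hval1⟩ := heigfacts 0
    have hint : Integrable (fun x => V x * ψ (0+1) x ^ 2) (μcube d) := hVbound (hVψ 0) (hψ2 0)
    have hgi : Integrable (fun x => ‖gradient (ψ (0+1)) x‖ ^ 2) (μcube d) :=
      (hψH1 (0+1) (by omega)).int_gradsq
    have hsplit := integral_add hgi hint
    rw [hval1] at hsplit
    have hlow := hVlow (hψ2 0) hint
    have hψ1sq : ∫ x, ψ (0+1) x ^ 2 ∂(μcube d) = 1 := by
      have h := hψψ1 0
      have h2 : L2sq d (ψ (0+1)) = 1 := by rw [L2sq_eq_L2ip]; exact h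
      exact h2
    have hgnn : (0:ℝ) ≤ ∫ x, ‖gradient (ψ (0+1)) x‖ ^ 2 ∂(μcube d) :=
      integral_nonneg fun x => sq_nonneg _
    rw [hψ1sq] at hlow
    have : Vmin ≤ lam (0+1) := by linarith
    simpa using this
  -- the union of supports, and u vanishes a.e. outside it
  have hNfacts : ∀ᵐ x ∂(μcube d), (∀ j : ℕ, ψ (j + 1) x = 0) → u x = 0 := by
    set N : Set (Pt d) := ⋃ j : ℕ, (cube d ∩ (ψ (j+1)) ⁻¹' ({0}ᶜ)) with hN
    have hNopen : IsOpen N := isOpen_iUnion fun j =>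
      (hψc j).isOpen_inter_preimage (isOpen_cube d) isOpen_compl_singleton
    have hNmeas := hNopen.measurableSet
    have hψ0 : ∀ᵐ x ∂(μcube d), x ∉ N → ∀ j : ℕ, ψ (j+1) x = 0 := by
      filter_upwards [ae_mem_cube d] with x hx hxN j
      by_contra hne
      exact hxN (Set.mem_iUnion.2 ⟨j, hx, hne⟩)
    have hbes : ∀ n, ∑ j ∈ Finset.range n, (L2ip d u (ψ (j+1)))^2
        ≤ ∫ x in N, u x ^ 2 ∂(μcube d) :=
      bessel_offset hNmeas hu.aemeas hu.int_sq hψm hψ2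
        (fun i j => horth (i+1) (j+1) (by omega) (by omega)) hψ0
    have hle : L2sq d u ≤ ∫ x in N, u x ^ 2 ∂(μcube d) := by
      rw [hParseval]
      exact Real.tsum_le_of_sum_range_le (fun j => sq_nonneg _) (fun n => hbes n)
    have hcompl := integral_add_compl hNmeas hu.int_sq (f := fun x => u x ^ 2)
    have hnc_nonneg : (0:ℝ) ≤ ∫ x in Nᶜ, u x ^ 2 ∂(μcube d) :=
      integral_nonneg fun x => sq_nonneg _
    have hnc0 : ∫ x in Nᶜ, u x ^ 2 ∂(μcube d) = 0 := by
      have htot : ∫ x, u x ^ 2 ∂(μcube d) = L2sq d u := rfl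
      rw [htot] at hcompl
      linarith
    have hzero : ∀ᵐ x ∂((μcube d).restrict Nᶜ), u x ^ 2 = 0 := by
      have := (integral_eq_zero_iff_of_nonneg_ae
        (Filter.Eventually.of_forall fun x => sq_nonneg (u x)) (hu.int_sq.restrict)).1 hnc0
      filter_upwards [this] with x hx
      simpa using hx
    have hzero' : ∀ᵐ x ∂(μcube d), x ∈ Nᶜ → u x ^ 2 = 0 :=
      (ae_restrict_iff' hNmeas.compl).1 hzero
    filter_upwards [hzero', ae_mem_cube d] with x h1 h2 hall
    have hxN : x ∈ Nᶜ := by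
      intro hxN
      obtain ⟨j, hj⟩ := Set.mem_iUnion.1 hxN
      exact hj.2 (hall j)
    exact (pow_eq_zero_iff two_ne_zero).1 (h1 hxN)
  -- measurability and integrability of V * u^2
  have hVu2m : AEMeasurable (fun x => V x * u x ^ 2) (μcube d) := by
    refine aemeas_V_mul hψm hψc hVψ ((hu.aemeas.pow_const 2)) ?_
    filter_upwards [hNfacts] with x hx hall
    rw [hx hall]; ring
  have hVu2int : Integrable (fun x => V x * u x ^ 2) (μcube d) := hVbound hVu2m hu.int_sq
  have hEsplit : energy d V u
      = (∫ x, ‖gradient u x‖ ^ 2 ∂(μcube d)) + ∫ x, V x * u x ^ 2 ∂(μcube d) :=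
    integral_add hu.int_gradsq hVu2int
  have hElb : Vmin * L2sq d u ≤ energy d V u := by
    have h1 := hVlow hu.int_sq hVu2int
    have h2 : (0:ℝ) ≤ ∫ x, ‖gradient u x‖ ^ 2 ∂(μcube d) :=
      integral_nonneg fun x => sq_nonneg _
    have h3 : L2sq d u = ∫ x, u x ^ 2 ∂(μcube d) := rfl
    rw [hEsplit, h3]
    linarith
  -- degenerate-vanishing helper
  have hSnn : (0:ℝ) ≤ L2sq d u := integral_nonneg fun x => sq_nonneg _
  have hdeg : L2sq d u = 0 → u =ᵐ[μcube d] 0 := by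
    intro h0
    have := (integral_eq_zero_iff_of_nonneg_ae
      (Filter.Eventually.of_forall fun x => sq_nonneg (u x)) hu.int_sq).1 h0
    filter_upwards [this] with x hx
    simp only [Pi.zero_apply] at hx ⊢
    exact (pow_eq_zero_iff two_ne_zero).1 hx
  have hdegip : u =ᵐ[μcube d] 0 → ∀ j : ℕ, 1 ≤ j → L2ip d u (ψ j) = 0 := by
    intro h0 j hj
    refine integral_eq_zero_of_ae ?_
    filter_upwards [h0] with x hx
    simp [hx]
  -- summability
  have hSA : Summable (fun j : ℕ => (L2ip d u (ψ (j + 1))) ^ 2) := by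
    by_contra h
    have h0 := tsum_eq_zero_of_not_summable h
    have hS0 : L2sq d u = 0 := by rw [hParseval, h0]
    have hz := hdegip (hdeg hS0)
    refine h (summable_zero.congr fun j => ?_)
    rw [hz (j + 1) (by omega)]
    ring
  have hSE : Summable (fun j : ℕ => lam (j + 1) * (L2ip d u (ψ (j + 1))) ^ 2) := by
    by_contra h
    have h0 := tsum_eq_zero_of_not_summable h
    have hE0 : energy d V u = 0 := by rw [hEnergy, h0]
    have hS0 : L2sq d u = 0 := by nlinarith [hElb]
    have hz := hdegip (hdeg hS0)
    refine h (summable_zero.congr fun j => ?_)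
    rw [hz (j + 1) (by omega)]
    ring
    -- case split on L2sq u
  rcases eq_or_lt_of_le hSnn with hS0 | hSpos
  · -- degenerate case : u = 0 in L²
    have hS0' : L2sq d u = 0 := hS0.symm
    have hu0 := hdeg hS0'
    have hzip := hdegip hu0
    have hpeq : Pperp d k k' ψ u = u := by
      funext x
      show u x - ∑ j ∈ Finset.Ico k k', L2ip d u (ψ j) * ψ j x = u x
      have hz : ∀ j ∈ Finset.Ico k k', L2ip d u (ψ j) * ψ j x = 0 := by
        intro j hj
        rw [hzip j (le_trans hk (Finset.mem_Ico.1 hj).1), zero_mul]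
      rw [Finset.sum_eq_zero hz, sub_zero]
    have hucube : ∀ x ∈ cube d, u x = 0 := zero_on_cube hu.contOn hu0
    have hgrad0 : ∀ x ∈ cube d, gradient u x = 0 := by
      intro x hx
      have hev : u =ᶠ[nhds x] fun _ => (0:ℝ) := by
        filter_upwards [(isOpen_cube d).mem_nhds hx] with y hy
        exact hucube y hy
      have hfd : fderiv ℝ u x = 0 := by
        rw [hev.fderiv_eq]
        exact fderiv_const_apply 0
      show (InnerProductSpace.toDual ℝ (Pt d)).symm (fderiv ℝ u x) = 0
      rw [hfd, map_zero]
    have hT0 : L2sq d (Pperp d k k' ψ u) = 0 := by rw [hpeq]; exact hS0'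
    have hG0 : gradSq d (Pperp d k k' ψ u) = 0 := by
      rw [hpeq]
      show ∫ x, ‖gradient u x‖ ^ 2 ∂(μcube d) = 0
      refine integral_eq_zero_of_ae ?_
      filter_upwards [ae_mem_cube d] with x hx
      rw [hgrad0 x hx]
      simp
    constructor
    · rw [hT0, hS0', mul_zero]
    · rw [hG0, hS0', mul_zero]
  · -- nondegenerate case
    have hSne : L2sq d u ≠ 0 := ne_of_gt hSpos
    have hjk : ∀ j ∈ Finset.Ico k k', 1 ≤ j :=
      fun j hj => le_trans hk (Finset.mem_Ico.1 hj).1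
    have hwm : AEMeasurable (fun x => ∑ j ∈ Finset.Ico k k', L2ip d u (ψ j) * ψ j x)
        (μcube d) :=
      Finset.aemeasurable_fun_sum _ fun j hj => ((hψH1 j (hjk j hj)).aemeas.const_mul _)
    have hpm : AEMeasurable (Pperp d k k' ψ u) (μcube d) := hu.aemeas.sub hwm
    have hw2 : Integrable (fun x => (∑ j ∈ Finset.Ico k k', L2ip d u (ψ j) * ψ j x) ^ 2)
        (μcube d) := by
      refine integrable_sq_sum _ _ (fun j hj => ((hψH1 j (hjk j hj)).aemeas.const_mul _))
        (fun j hj => ?_)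
      exact ((hψH1 j (hjk j hj)).int_sq.const_mul ((L2ip d u (ψ j)) ^ 2)).congr
        (Filter.EventuallyEq.of_eq (funext fun x => by ring))
    have hp2int : Integrable (fun x => (Pperp d k k' ψ u) x ^ 2) (μcube d) := by
      refine ((hu.int_sq.const_mul 2).add (hw2.const_mul 2)).mono'
        ((hpm.pow_const 2).aestronglyMeasurable) ?_
      filter_upwards with x
      have hpx : (Pperp d k k' ψ u) x
          = u x - ∑ j ∈ Finset.Ico k k', L2ip d u (ψ j) * ψ j x := rfl
      simp only [Pi.add_apply]
      rw [Real.norm_eq_abs, abs_of_nonneg (sq_nonneg _), hpx]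
      nlinarith [sq_nonneg (u x + ∑ j ∈ Finset.Ico k k', L2ip d u (ψ j) * ψ j x)]
    -- gradient of Pperp on the cube
    have hpgrad : ∀ x ∈ cube d, gradient (Pperp d k k' ψ u) x
        = gradient u x - ∑ j ∈ Finset.Ico k k', L2ip d u (ψ j) • gradient (ψ j) x := by
      intro x hx
      have hdu := hu.2.1 x hx
      have hdψ : ∀ j ∈ Finset.Ico k k', DifferentiableAt ℝ (ψ j) x :=
        fun j hj => (hψH1 j (hjk j hj)).2.1 x hx
      have hsum_d : DifferentiableAt ℝ
          (fun y => ∑ j ∈ Finset.Ico k k', L2ip d u (ψ j) * ψ j y) x :=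
        DifferentiableAt.fun_sum fun j hj => ((hdψ j hj).const_mul _)
      have hfd : fderiv ℝ (Pperp d k k' ψ u) x
          = fderiv ℝ u x - ∑ j ∈ Finset.Ico k k', L2ip d u (ψ j) • fderiv ℝ (ψ j) x := by
        have h1 : fderiv ℝ (fun y => u y
            - ∑ j ∈ Finset.Ico k k', L2ip d u (ψ j) * ψ j y) x
            = fderiv ℝ u x - fderiv ℝ
              (fun y => ∑ j ∈ Finset.Ico k k', L2ip d u (ψ j) * ψ j y) x :=
          fderiv_sub hdu hsum_d
        have h2 : fderiv ℝ (fun y => ∑ j ∈ Finset.Ico k k', L2ip d u (ψ j) * ψ j y) x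
            = ∑ j ∈ Finset.Ico k k', fderiv ℝ (fun y => L2ip d u (ψ j) * ψ j y) x :=
          fderiv_fun_sum fun j hj => ((hdψ j hj).const_mul _)
        have h3 : ∀ j ∈ Finset.Ico k k', fderiv ℝ (fun y => L2ip d u (ψ j) * ψ j y) x
            = L2ip d u (ψ j) • fderiv ℝ (ψ j) x :=
          fun j hj => fderiv_const_mul (hdψ j hj) _
        show fderiv ℝ (fun y => u y - ∑ j ∈ Finset.Ico k k', L2ip d u (ψ j) * ψ j y) x = _
        rw [h1, h2, Finset.sum_congr rfl h3]
      show (InnerProductSpace.toDual ℝ (Pt d)).symm (fderiv ℝ (Pperp d k k' ψ u) x) = _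
      rw [hfd, map_sub, map_sum]
      congr 1
      refine Finset.sum_congr rfl fun j hj => ?_
      rw [_root_.map_smul]
      rfl
    have hgradw2 : Integrable (fun x =>
        (∑ j ∈ Finset.Ico k k', |L2ip d u (ψ j)| * ‖gradient (ψ j) x‖) ^ 2) (μcube d) := by
      refine integrable_sq_sum _ _
        (fun j hj => (((measurable_gradient_fun d (ψ j)).norm.aemeasurable).const_mul _))
        (fun j hj => ?_)
      exact ((hψH1 j (hjk j hj)).int_gradsq.const_mul (|L2ip d u (ψ j)| ^ 2)).congr
        (Filter.EventuallyEq.of_eq (funext fun x => by ring))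
    have hmeasp : AEStronglyMeasurable (fun x => ‖gradient (Pperp d k k' ψ u) x‖ ^ 2)
        (μcube d) :=
      ((measurable_gradient_fun d (Pperp d k k' ψ u)).norm.pow_const 2).aestronglyMeasurable
    have hpgradint : Integrable (fun x => ‖gradient (Pperp d k k' ψ u) x‖ ^ 2) (μcube d) := by
      refine ((hu.int_gradsq.const_mul 2).add (hgradw2.const_mul 2)).mono' hmeasp ?_
      filter_upwards [ae_mem_cube d] with x hx
      have hfd := hpgrad x hx
      have hnorm : ‖gradient (Pperp d k k' ψ u) x‖ ≤ ‖gradient u x‖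
          + ∑ j ∈ Finset.Ico k k', |L2ip d u (ψ j)| * ‖gradient (ψ j) x‖ := by
        rw [hfd]
        refine le_trans (norm_sub_le _ _) (add_le_add le_rfl ?_)
        refine le_trans (norm_sum_le _ _) (le_of_eq (Finset.sum_congr rfl fun j hj => ?_))
        rw [norm_smul, Real.norm_eq_abs]
      have h0 : (0:ℝ) ≤ ‖gradient u x‖ := norm_nonneg _
      have h1 : (0:ℝ) ≤ ∑ j ∈ Finset.Ico k k', |L2ip d u (ψ j)| * ‖gradient (ψ j) x‖ :=
        Finset.sum_nonneg fun j hj => mul_nonneg (abs_nonneg _) (norm_nonneg _)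
      have hsq : ‖gradient (Pperp d k k' ψ u) x‖ ^ 2
          ≤ (‖gradient u x‖
            + ∑ j ∈ Finset.Ico k k', |L2ip d u (ψ j)| * ‖gradient (ψ j) x‖) ^ 2 :=
        pow_le_pow_left₀ (norm_nonneg _) hnorm 2
      simp only [Pi.add_apply]
      rw [Real.norm_eq_abs, abs_of_nonneg (sq_nonneg _)]
      nlinarith [hsq, sq_nonneg (‖gradient u x‖
        - ∑ j ∈ Finset.Ico k k', |L2ip d u (ψ j)| * ‖gradient (ψ j) x‖)]
    have hVp2m : AEMeasurable (fun x => V x * (Pperp d k k' ψ u) x ^ 2) (μcube d) := by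
      refine aemeas_V_mul hψm hψc hVψ (hpm.pow_const 2) ?_
      filter_upwards [hNfacts] with x hx hall
      have hu0 : u x = 0 := hx hall
      have hsum0 : ∑ j ∈ Finset.Ico k k', L2ip d u (ψ j) * ψ j x = 0 := by
        refine Finset.sum_eq_zero fun j hj => ?_
        have h1 : 1 ≤ j := hjk j hj
        have h2 := hall (j - 1)
        rw [Nat.sub_add_cancel h1] at h2
        rw [h2, mul_zero]
      have hpx : (Pperp d k k' ψ u) x
          = u x - ∑ j ∈ Finset.Ico k k', L2ip d u (ψ j) * ψ j x := rfl
      rw [hpx, hu0, hsum0]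
      ring
    have hVp2int := hVbound hVp2m hp2int
    have hepsplit : energy d V (Pperp d k k' ψ u)
        = (∫ x, ‖gradient (Pperp d k k' ψ u) x‖ ^ 2 ∂(μcube d))
          + ∫ x, V x * (Pperp d k k' ψ u) x ^ 2 ∂(μcube d) :=
      integral_add hpgradint hVp2int
    have hgrad_le : gradSq d (Pperp d k k' ψ u)
        ≤ energy d V (Pperp d k k' ψ u) - Vmin * L2sq d (Pperp d k k' ψ u) := by
      have hlow := hVlow hp2int hVp2int
      have hg : gradSq d (Pperp d k k' ψ u)
          = ∫ x, ‖gradient (Pperp d k k' ψ u) x‖ ^ 2 ∂(μcube d) := rfl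
      have hT : L2sq d (Pperp d k k' ψ u)
          = ∫ x, (Pperp d k k' ψ u) x ^ 2 ∂(μcube d) := rfl
      rw [hepsplit, hg, hT]
      linarith
    -- numeric endgame
    have hm : 0 < min (β + lam 1 - lam k) (lam k' - lam k) :=
      lt_min (by linarith) (by linarith)
    have hβpos : 0 < β := by
      have := hmono 1 k le_rfl hk
      linarith
    have hPnn : (0:ℝ) ≤ ∑ j ∈ Finset.Ico 1 k, (L2ip d u (ψ j)) ^ 2 :=
      Finset.sum_nonneg fun j _ => sq_nonneg _
    have hbS : Summable (fun j : ℕ =>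
        if k ≤ j + 1 ∧ j + 1 < k' then (0:ℝ) else (L2ip d u (ψ (j + 1))) ^ 2) := by
      refine Summable.of_nonneg_of_le (fun j => ?_) (fun j => ?_) hSA
      · split_ifs
        · exact le_rfl
        · exact sq_nonneg _
      · split_ifs
        · exact sq_nonneg _
        · exact le_rfl
    have heS : Summable (fun j : ℕ =>
        if k ≤ j + 1 ∧ j + 1 < k' then (0:ℝ)
        else lam (j + 1) * (L2ip d u (ψ (j + 1))) ^ 2) := by
      refine Summable.of_nonneg_of_le (fun j => ?_) (fun j => ?_) hSE
      · split_ifs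
        · exact le_rfl
        · exact mul_nonneg (hlampos (j+1) (by omega)).le (sq_nonneg _)
      · split_ifs
        · exact mul_nonneg (hlampos (j+1) (by omega)).le (sq_nonneg _)
        · exact le_rfl
    have hqS : Summable (fun j : ℕ =>
        if j + 1 < k then (L2ip d u (ψ (j + 1))) ^ 2 else (0:ℝ)) := by
      refine Summable.of_nonneg_of_le (fun j => ?_) (fun j => ?_) hSA
      · split_ifs
        · exact sq_nonneg _
        · exact le_rfl
      · split_ifs
        · exact le_rfl
        · exact sq_nonneg _
    have htsumq : (∑' j : ℕ, if j + 1 < k then (L2ip d u (ψ (j + 1))) ^ 2 else (0:ℝ))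
        = ∑ j ∈ Finset.Ico 1 k, (L2ip d u (ψ j)) ^ 2 := by
      have hvan : ∀ j ∉ Finset.range (k - 1),
          (if j + 1 < k then (L2ip d u (ψ (j + 1))) ^ 2 else (0:ℝ)) = 0 := by
        intro j hj
        rw [if_neg]
        have hnj : ¬ (j < k - 1) := fun h => hj (Finset.mem_range.2 h)
        omega
      rw [tsum_eq_sum hvan]
      rw [Finset.sum_Ico_eq_sum_range]
      refine Finset.sum_congr rfl fun j hj => ?_
      have hjlt := Finset.mem_range.1 hj
      rw [if_pos (by omega), Nat.add_comm j 1]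
    have keyA : min (β + lam 1 - lam k) (lam k' - lam k) * L2sq d (Pperp d k k' ψ u)
        + lam k * L2sq d u
        ≤ energy d V u + β * ∑ j ∈ Finset.Ico 1 k, (L2ip d u (ψ j)) ^ 2 := by
      rw [hParsevalP, hParseval, hEnergy, ← htsumq, ← tsum_mul_left, ← tsum_mul_left,
        ← tsum_mul_left,
        ← Summable.tsum_add ((hbS.mul_left _)) ((hSA.mul_left _)),
        ← Summable.tsum_add hSE ((hqS.mul_left _))]
      refine Summable.tsum_le_tsum (fun j => ?_) ((hbS.mul_left _).add (hSA.mul_left _))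
        (hSE.add (hqS.mul_left _))
      have hsq : (0:ℝ) ≤ (L2ip d u (ψ (j + 1))) ^ 2 := sq_nonneg _
      have hm1 : min (β + lam 1 - lam k) (lam k' - lam k) ≤ β + lam 1 - lam k :=
        min_le_left _ _
      have hm2 : min (β + lam 1 - lam k) (lam k' - lam k) ≤ lam k' - lam k :=
        min_le_right _ _
      by_cases h1 : j + 1 < k
      · rw [if_neg (by omega), if_pos h1]
        have hl : lam 1 ≤ lam (j + 1) := hmono 1 (j + 1) le_rfl (by omega)
        nlinarith
      · by_cases h2 : j + 1 < k'
        · rw [if_pos ⟨by omega, h2⟩, if_neg h1]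
          have hl : lam k ≤ lam (j + 1) := hmono k (j + 1) hk (by omega)
          nlinarith
        · rw [if_neg (by intro hc; exact h2 hc.2), if_neg h1]
          have hl : lam k' ≤ lam (j + 1) := hmono k' (j + 1) (by omega) (by omega)
          nlinarith
    have hDS : (loss d V ψ β k u - lam k) * L2sq d u
        = energy d V u + β * (∑ j ∈ Finset.Ico 1 k, (L2ip d u (ψ j)) ^ 2)
          - lam k * L2sq d u := by
      have hl : loss d V ψ β k u = energy d V u / L2sq d u
          + β * (∑ j ∈ Finset.Ico 1 k, (L2ip d u (ψ j)) ^ 2) / L2sq d u := rfl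
      rw [hl]
      field_simp
    have hTle : L2sq d (Pperp d k k' ψ u)
        ≤ (energy d V u + β * ∑ j ∈ Finset.Ico 1 k, (L2ip d u (ψ j)) ^ 2
            - lam k * L2sq d u) / min (β + lam 1 - lam k) (lam k' - lam k) := by
      rw [le_div_iff₀ hm]
      linarith [keyA]
    constructor
    · rw [div_mul_eq_mul_div, hDS, le_div_iff₀ hm]
      linarith [keyA]
    · have hEp : energy d V (Pperp d k k' ψ u)
          = (energy d V u - lam k * L2sq d u) + lam k * L2sq d (Pperp d k k' ψ u) := by
        rw [hEnergyP, hParsevalP, hEnergy, hParseval]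
        have hcg : ∀ j : ℕ, (if k ≤ j + 1 ∧ j + 1 < k' then (0:ℝ)
            else lam (j + 1) * (L2ip d u (ψ (j + 1))) ^ 2)
            = (lam (j + 1) * (L2ip d u (ψ (j + 1))) ^ 2
                - lam k * (L2ip d u (ψ (j + 1))) ^ 2)
              + lam k * (if k ≤ j + 1 ∧ j + 1 < k' then (0:ℝ)
                  else (L2ip d u (ψ (j + 1))) ^ 2) := by
          intro j
          by_cases hgap : k ≤ j + 1 ∧ j + 1 < k'
          · have hle1 : lam (j + 1) ≤ lam (k' - 1) :=
              hmono (j + 1) (k' - 1) (by omega) (by omega)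
            have hle2 : lam k ≤ lam (j + 1) := hmono k (j + 1) hk hgap.1
            have heqk : lam (j + 1) = lam k := by
              rw [hk'3] at hle1
              linarith
            rw [if_pos hgap, if_pos hgap, heqk]
            ring
          · rw [if_neg hgap, if_neg hgap]
            ring
        rw [tsum_congr hcg]
        have hsub : Summable (fun j : ℕ => lam (j + 1) * (L2ip d u (ψ (j + 1))) ^ 2
            - lam k * (L2ip d u (ψ (j + 1))) ^ 2) := hSE.sub (hSA.mul_left _)
        rw [Summable.tsum_add hsub (hbS.mul_left _), Summable.tsum_sub hSE (hSA.mul_left _),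
          tsum_mul_left, tsum_mul_left]
      have hlamkV : Vmin ≤ lam k := le_trans hVminlam1 (hmono 1 k le_rfl hk)
      have hEp_le : energy d V (Pperp d k k' ψ u)
          ≤ (energy d V u + β * ∑ j ∈ Finset.Ico 1 k, (L2ip d u (ψ j)) ^ 2
              - lam k * L2sq d u) + lam k * L2sq d (Pperp d k k' ψ u) := by
        rw [hEp]
        have := mul_nonneg hβpos.le hPnn
        linarith
      have hfin : (lam k - Vmin) * L2sq d (Pperp d k k' ψ u)
          ≤ (lam k - Vmin) * ((energy d V u
              + β * ∑ j ∈ Finset.Ico 1 k, (L2ip d u (ψ j)) ^ 2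
              - lam k * L2sq d u) / min (β + lam 1 - lam k) (lam k' - lam k)) :=
        mul_le_mul_of_nonneg_left hTle (by linarith)
      have hRHS : (loss d V ψ β k u - lam k)
          * ((lam k - Vmin) / min (β + lam 1 - lam k) (lam k' - lam k) + 1)
          * L2sq d u
          = (energy d V u + β * ∑ j ∈ Finset.Ico 1 k, (L2ip d u (ψ j)) ^ 2
              - lam k * L2sq d u)
            + (lam k - Vmin) * ((energy d V u
              + β * ∑ j ∈ Finset.Ico 1 k, (L2ip d u (ψ j)) ^ 2
              - lam k * L2sq d u) / min (β + lam 1 - lam k) (lam k' - lam k)) := by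
        have hmne : min (β + lam 1 - lam k) (lam k' - lam k) ≠ 0 := ne_of_gt hm
        field_simp
        linear_combination (min (β + lam 1 - lam k) (lam k' - lam k)
          + (lam k - Vmin)) * hDS
      rw [hRHS]
      linarith [hgrad_le, hEp_le, hfin]
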